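/- Let {φ_ε} be a family of mollifiers, X ⊂ R^n closed with positive Lebesgue measure, p ∈ C¹(X) positive with finite positive integral, and let E_ε and E be the mollified interaction energy and the limit functional E(μ) = ∫_X q²/p (for μ with density q absolutely continuous w.r.t. μ*, +∞ otherwise). Then the recovery-sequence half of Γ-convergence holds: for every probability measure μ on R^n, limsup_{ε→0} E_ε(μ) ≤ E(μ) (taking the constant sequence μ_ε = μ). -/

import Mathlib

open MeasureTheory Filter
open scoped ENNReal

/-- A family of mollifiers in the sense of the paper: nonnegative, even, unit `L¹` mass,
bounded, with mass outside any fixed ball vanishing in `L¹` and `L^∞` as `ε → 0`. -/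
def IsMollifierFamily {n : ℕ} (φ : ℝ → EuclideanSpace ℝ (Fin n) → ℝ) : Prop :=
  (∀ ε : ℝ, 0 < ε →
    Continuous (φ ε) ∧ (∀ x, 0 ≤ φ ε x) ∧ (∀ x, φ ε (-x) = φ ε x) ∧
      (∫ x, φ ε x) = 1 ∧ ∃ C : ℝ, ∀ x, φ ε x ≤ C) ∧
  ∀ δ : ℝ, 0 < δ →
    Tendsto (fun ε => ∫ x in (Metric.ball (0 : EuclideanSpace ℝ (Fin n)) δ)ᶜ, φ ε x)
        (nhdsWithin 0 (Set.Ioi 0)) (nhds 0) ∧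
    Tendsto (fun ε => eLpNorm
          (((Metric.ball (0 : EuclideanSpace ℝ (Fin n)) δ)ᶜ).indicator (φ ε)) ⊤ volume)
        (nhdsWithin 0 (Set.Ioi 0)) (nhds 0)

lemma aux_core_ineq (a b P Q : ℝ) (hP : 0 < P) (hQ : 0 < Q) :
    a * b * (P * Q) ^ (-(1:ℝ)/2) ≤ (a ^ 2 / P + b ^ 2 / Q) / 2 := by
  have hPQ : (P * Q) ^ (-(1:ℝ)/2) = P ^ (-(1:ℝ)/2) * Q ^ (-(1:ℝ)/2) :=
    Real.mul_rpow hP.le hQ.le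
  set u := a * P ^ (-(1:ℝ)/2) with hu
  set v := b * Q ^ (-(1:ℝ)/2) with hv
  have hsq : ∀ c R : ℝ, 0 < R → (c * R ^ (-(1:ℝ)/2)) ^ 2 = c ^ 2 / R := by
    intro c R hR
    have : (R ^ (-(1:ℝ)/2)) ^ 2 = R ^ ((-(1:ℝ)/2) * 2) := by
      rw [← Real.rpow_natCast (R ^ (-(1:ℝ)/2)) 2, ← Real.rpow_mul hR.le]
      norm_num
    rw [mul_pow, this]
    norm_num
    rw [Real.rpow_neg_one]
    ring
  have h1 : u ^ 2 = a ^ 2 / P := hsq a P hP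
  have h2 : v ^ 2 = b ^ 2 / Q := hsq b Q hQ
  have h3 : a * b * (P * Q) ^ (-(1:ℝ)/2) = u * v := by rw [hPQ, hu, hv]; ring
  rw [h3, ← h1, ← h2]
  nlinarith [sq_nonneg (u - v)]

lemma aux_lint_sub_left {n : ℕ} {g : EuclideanSpace ℝ (Fin n) → ℝ≥0∞} (hg : Measurable g)
    (x : EuclideanSpace ℝ (Fin n)) : ∫⁻ y, g (x - y) = ∫⁻ y, g y :=
  (Measure.measurePreserving_sub_left volume x).lintegral_comp hg

open scoped Classical in
theorem stmt_17 {n : ℕ} (X : Set (EuclideanSpace ℝ (Fin n))) (hXc : IsClosed X)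
    (hXpos : 0 < volume X)
    (p : EuclideanSpace ℝ (Fin n) → ℝ) (hpc : ContinuousOn p X)
    (hppos : ∀ x ∈ X, 0 < p x)
    (hpint : IntegrableOn p X volume) (hpintpos : 0 < ∫ x in X, p x)
    (φ : ℝ → EuclideanSpace ℝ (Fin n) → ℝ) (hφ : IsMollifierFamily φ)
    (μstar : Measure (EuclideanSpace ℝ (Fin n)))
    (hμstar : μstar =
      volume.withDensity fun x => ENNReal.ofReal (X.indicator p x / ∫ x in X, p x))
    (μ : Measure (EuclideanSpace ℝ (Fin n))) (hprob : IsProbabilityMeasure μ) :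
    Filter.limsup
      (fun ε => ∫⁻ x, ∫⁻ y, (if x ∈ X ∧ y ∈ X then
          ENNReal.ofReal (φ ε (x - y) * (p x * p y) ^ (-(1:ℝ)/2)) else ⊤) ∂μ ∂μ)
      (nhdsWithin 0 (Set.Ioi 0)) ≤
    (if μ ≪ μstar then
        ∫⁻ x in X, ENNReal.ofReal (((μ.rnDeriv volume x).toReal) ^ 2 / p x)
      else ⊤) := by
  by_cases hac : μ ≪ μstar
  swap
  · rw [if_neg hac]; exact le_top
  rw [if_pos hac]
  set R : ℝ≥0∞ := ∫⁻ x in X, ENNReal.ofReal (((μ.rnDeriv volume x).toReal) ^ 2 / p x) with hR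
  have hXm : MeasurableSet X := hXc.measurableSet
  -- μ is absolutely continuous wrt volume, and vanishes off X
  have hμvol : μ ≪ volume := by
    refine hac.trans ?_
    rw [hμstar]; exact withDensity_absolutelyContinuous _ _
  have hμstarX : μstar Xᶜ = 0 := by
    rw [hμstar, withDensity_apply _ hXm.compl]
    rw [setLIntegral_congr_fun hXm.compl
      (fun x hx => by
        simp [Set.indicator_of_notMem hx] : ∀ x ∈ Xᶜ,
          ENNReal.ofReal (X.indicator p x / ∫ x in X, p x) = 0)]
    simp
  have hμX : μ Xᶜ = 0 := hac hμstarX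
  set q : EuclideanSpace ℝ (Fin n) → ℝ≥0∞ := μ.rnDeriv volume with hqdef
  have hq : Measurable q := μ.measurable_rnDeriv volume
  have hμq : volume.withDensity q = μ := Measure.withDensity_rnDeriv_eq μ volume hμvol
  have hqfin : ∀ᵐ x ∂(volume : Measure (EuclideanSpace ℝ (Fin n))), q x < ∞ :=
    μ.rnDeriv_lt_top volume
  have hq0 : ∀ᵐ x ∂(volume : Measure (EuclideanSpace ℝ (Fin n))), x ∉ X → q x = 0 := by
    have h0 : ∫⁻ x in Xᶜ, q x ∂volume = 0 := by
      rw [← withDensity_apply _ hXm.compl, hμq]; exact hμX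
    have := (setLIntegral_eq_zero_iff hXm.compl hq).mp h0
    filter_upwards [this] with x hx hxX using hx hxX
  -- the density for the limit functional, with measurability
  set A : EuclideanSpace ℝ (Fin n) → ℝ≥0∞ :=
    X.indicator (fun z => ENNReal.ofReal ((q z).toReal ^ 2 / p z)) with hAdef
  have hA : AEMeasurable A volume := by
    rw [hAdef, aemeasurable_indicator_iff hXm]
    exact (ENNReal.measurable_ofReal.comp_aemeasurable
      (((hq.ennreal_toReal.pow_const 2).aemeasurable.restrict).div
        (hpc.aemeasurable hXm)))
  have hRA : ∫⁻ x, A x = R := by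
    rw [hAdef, hR, lintegral_indicator hXm]
  -- main pointwise-in-ε bound
  have key : ∀ ε : ℝ, ε ∈ Set.Ioi (0:ℝ) →
      (∫⁻ x, ∫⁻ y, (if x ∈ X ∧ y ∈ X then
          ENNReal.ofReal (φ ε (x - y) * (p x * p y) ^ (-(1:ℝ)/2)) else ⊤) ∂μ ∂μ) ≤ R := by
    intro ε hε
    obtain ⟨hφc, hφnn, hφeven, hφint1, C, hφbd⟩ := hφ.1 ε hε
    have hφInt : Integrable (φ ε) := by
      by_contra h
      rw [integral_undef h] at hφint1; norm_num at hφint1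
    have hφmeas : Measurable (φ ε) := hφc.measurable
    set F : EuclideanSpace ℝ (Fin n) → EuclideanSpace ℝ (Fin n) → ℝ≥0∞ :=
      fun x y => if x ∈ X ∧ y ∈ X then
          ENNReal.ofReal (φ ε (x - y) * (p x * p y) ^ (-(1:ℝ)/2)) else ⊤ with hFdef
    set B : EuclideanSpace ℝ (Fin n) → EuclideanSpace ℝ (Fin n) → ℝ≥0∞ :=
      fun x y => ENNReal.ofReal (φ ε (x - y)) * ((A x + A y) / 2) with hBdef
    -- rewrite wrt Lebesgue
    have step1 : (∫⁻ x, ∫⁻ y, F x y ∂μ ∂μ)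
        = ∫⁻ x, q x * ∫⁻ y, q y * F x y ∂volume ∂volume := by
      conv_lhs => rw [← hμq]
      rw [lintegral_withDensity_eq_lintegral_mul_non_measurable _ hq hqfin]
      refine lintegral_congr fun x => ?_
      simp only [Pi.mul_apply]
      congr 1
      rw [lintegral_withDensity_eq_lintegral_mul_non_measurable _ hq hqfin]
      rfl
    -- pointwise bound
    have ptwise : ∀ᵐ x ∂(volume : Measure (EuclideanSpace ℝ (Fin n))),
        ∀ᵐ y ∂(volume : Measure (EuclideanSpace ℝ (Fin n))),
          q x * (q y * F x y) ≤ B x y := by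
      filter_upwards [hqfin, hq0] with x hxfin hx0
      filter_upwards [hqfin, hq0] with y hyfin hy0
      rcases eq_or_ne (q x) 0 with hqx | hqx
      · simp [hqx]
      rcases eq_or_ne (q y) 0 with hqy | hqy
      · simp [hqy]
      have hxX : x ∈ X := by by_contra h; exact hqx (hx0 h)
      have hyX : y ∈ X := by by_contra h; exact hqy (hy0 h)
      have hFxy : F x y = ENNReal.ofReal (φ ε (x - y) * (p x * p y) ^ (-(1:ℝ)/2)) := by
        rw [hFdef]; simp [hxX, hyX]
      set a := (q x).toReal with hadef
      set b := (q y).toReal with hbdef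
      have ha : 0 ≤ a := ENNReal.toReal_nonneg
      have hb : 0 ≤ b := ENNReal.toReal_nonneg
      have hqa : q x = ENNReal.ofReal a := (ENNReal.ofReal_toReal hxfin.ne).symm
      have hqb : q y = ENNReal.ofReal b := (ENNReal.ofReal_toReal hyfin.ne).symm
      have hAx : A x = ENNReal.ofReal (a ^ 2 / p x) := by
        rw [hAdef]; simp [Set.indicator_of_mem hxX]; rfl
      have hAy : A y = ENNReal.ofReal (b ^ 2 / p y) := by
        rw [hAdef]; simp [Set.indicator_of_mem hyX]; rfl
      have hrpownn : (0:ℝ) ≤ (p x * p y) ^ (-(1:ℝ)/2) :=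
        Real.rpow_nonneg (mul_nonneg (hppos x hxX).le (hppos y hyX).le) _
      have hLHS : q x * (q y * F x y)
          = ENNReal.ofReal (a * (b * (φ ε (x - y) * (p x * p y) ^ (-(1:ℝ)/2)))) := by
        rw [hFxy, hqa, hqb, ← ENNReal.ofReal_mul hb, ← ENNReal.ofReal_mul ha]
      have hnn1 : (0:ℝ) ≤ a ^ 2 / p x := div_nonneg (sq_nonneg a) (hppos x hxX).le
      have hnn2 : (0:ℝ) ≤ b ^ 2 / p y := div_nonneg (sq_nonneg b) (hppos y hyX).le
      have h2' : ENNReal.ofReal ((a ^ 2 / p x + b ^ 2 / p y) / 2) = (A x + A y) / 2 := by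
        rw [ENNReal.ofReal_div_of_pos (by norm_num : (0:ℝ) < 2),
          ENNReal.ofReal_add hnn1 hnn2, ← hAx, ← hAy]
        norm_num
      have hRHS : B x y = ENNReal.ofReal
          (φ ε (x - y) * ((a ^ 2 / p x + b ^ 2 / p y) / 2)) := by
        rw [ENNReal.ofReal_mul (hφnn _), h2', hBdef]
      rw [hLHS, hRHS]
      apply ENNReal.ofReal_le_ofReal
      have := aux_core_ineq a b (p x) (p y) (hppos x hxX) (hppos y hyX)
      calc a * (b * (φ ε (x - y) * (p x * p y) ^ (-(1:ℝ)/2)))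
          = φ ε (x - y) * (a * b * (p x * p y) ^ (-(1:ℝ)/2)) := by ring
        _ ≤ φ ε (x - y) * ((a ^ 2 / p x + b ^ 2 / p y) / 2) :=
            mul_le_mul_of_nonneg_left this (hφnn _)
    -- lintegral of φ translates
    have hφlint : ∫⁻ z, ENNReal.ofReal (φ ε z) = 1 := by
      rw [← ofReal_integral_eq_lintegral_ofReal hφInt
        (Filter.Eventually.of_forall hφnn), hφint1, ENNReal.ofReal_one]
    have hφlint_left : ∀ x, ∫⁻ y, ENNReal.ofReal (φ ε (x - y)) = 1 := fun x =>
      (aux_lint_sub_left (ENNReal.measurable_ofReal.comp hφmeas) x).trans hφlint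
    have hφlint_right : ∀ y, ∫⁻ x, ENNReal.ofReal (φ ε (x - y)) = 1 := fun y =>
      (lintegral_sub_right_eq_self (fun z => ENNReal.ofReal (φ ε z)) y).trans hφlint
    -- compute the integral of B
    have hAne : ∀ z, A z ≠ ⊤ := fun z => by
      rw [hAdef]
      by_cases h : z ∈ X <;> simp [h]
    have hA2ne : ∀ z, A z / 2 ≠ ⊤ := fun z =>
      (ENNReal.div_lt_top (hAne z) (by norm_num)).ne
    have hBcalc : (∫⁻ x, ∫⁻ y, B x y ∂volume ∂volume) = R := by
      have hsplit : ∀ x y, B x y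
          = ENNReal.ofReal (φ ε (x - y)) * (A x / 2)
            + ENNReal.ofReal (φ ε (x - y)) * (A y / 2) := by
        intro x y
        rw [hBdef]
        simp only
        rw [ENNReal.add_div, mul_add]
      have hm1 : ∀ x : EuclideanSpace ℝ (Fin n),
          Measurable (fun y => ENNReal.ofReal (φ ε (x - y)) * (A x / 2)) := by
        intro x
        exact (ENNReal.measurable_ofReal.comp (hφmeas.comp (measurable_const.sub
          measurable_id))).mul_const _
      have inner1 : ∀ x : EuclideanSpace ℝ (Fin n),
          (∫⁻ y, ENNReal.ofReal (φ ε (x - y)) * (A x / 2)) = A x / 2 := fun x =>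
        (lintegral_mul_const' (A x / 2) _ (hA2ne x)).trans
          (by rw [hφlint_left x, one_mul])
      have swap2 : (∫⁻ x, ∫⁻ y, ENNReal.ofReal (φ ε (x - y)) * (A y / 2) ∂volume ∂volume)
          = ∫⁻ y, ∫⁻ x, ENNReal.ofReal (φ ε (x - y)) * (A y / 2) ∂volume ∂volume := by
        apply lintegral_lintegral_swap
        exact (ENNReal.measurable_ofReal.comp (hφmeas.comp
            (measurable_fst.sub measurable_snd))).aemeasurable.mul
          ((hA.comp_quasiMeasurePreserving
            MeasureTheory.Measure.quasiMeasurePreserving_snd).div (aemeasurable_const))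
      have inner2 : ∀ y : EuclideanSpace ℝ (Fin n),
          (∫⁻ x, ENNReal.ofReal (φ ε (x - y)) * (A y / 2)) = A y / 2 := fun y =>
        (lintegral_mul_const' (A y / 2) _ (hA2ne y)).trans
          (by rw [hφlint_right y, one_mul])
      calc (∫⁻ x, ∫⁻ y, B x y ∂volume ∂volume)
          = ∫⁻ x, ((∫⁻ y, ENNReal.ofReal (φ ε (x - y)) * (A x / 2))
              + ∫⁻ y, ENNReal.ofReal (φ ε (x - y)) * (A y / 2)) ∂volume := by
            refine lintegral_congr fun x => ?_
            simp_rw [hsplit]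
            rw [lintegral_add_left (hm1 x)]
        _ = ∫⁻ x, (A x / 2 + ∫⁻ y, ENNReal.ofReal (φ ε (x - y)) * (A y / 2)) ∂volume := by
            refine lintegral_congr fun x => ?_
            rw [inner1 x]
        _ = (∫⁻ x, A x / 2 ∂volume)
              + ∫⁻ x, ∫⁻ y, ENNReal.ofReal (φ ε (x - y)) * (A y / 2) ∂volume ∂volume := by
            rw [lintegral_add_left' (hA.div_const 2)]
        _ = (∫⁻ x, A x / 2 ∂volume) + ∫⁻ y, A y / 2 ∂volume := by
            rw [swap2]
            congr 1
            refine lintegral_congr fun y => inner2 y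
        _ = R := by
            simp_rw [div_eq_mul_inv]
            rw [lintegral_mul_const'' _ hA, ← div_eq_mul_inv, ENNReal.add_halves, hRA]
    -- conclude
    calc (∫⁻ x, ∫⁻ y, F x y ∂μ ∂μ)
        = ∫⁻ x, q x * ∫⁻ y, q y * F x y ∂volume ∂volume := step1
      _ = ∫⁻ x, ∫⁻ y, q x * (q y * F x y) ∂volume ∂volume := by
          refine lintegral_congr_ae ?_
          filter_upwards [hqfin] with x hx
          rw [lintegral_const_mul' _ _ hx.ne]
      _ ≤ ∫⁻ x, ∫⁻ y, B x y ∂volume ∂volume := by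
          refine lintegral_mono_ae ?_
          filter_upwards [ptwise] with x hx
          exact lintegral_mono_ae hx
      _ = R := hBcalc
  exact Filter.limsup_le_of_le (by isBoundedDefault)
    (Filter.eventually_of_mem self_mem_nhdsWithin key)
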